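/- For every positive definite Hermitian matrix σ and every matrix X on a finite-dimensional complex Hilbert space, T_σ([X, σ]) = [X, log σ], where T_σ(Y) = ∫₀^∞ (σ + s·1)⁻¹ Y (σ + s·1)⁻¹ ds and [A,B] = AB − BA. -/

import Mathlib

open Matrix MeasureTheory
open scoped ComplexOrder

open Set Filter

lemma tendsto_aux {a b : ℝ} (ha : 0 < a) (hb : 0 < b) :
    Tendsto (fun s : ℝ => Real.log (a + s) - Real.log (b + s)) atTop (nhds 0) := by
  have h1 : Tendsto (fun s : ℝ => (a + s) / (b + s)) atTop (nhds 1) := by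
    have h2 : Tendsto (fun s : ℝ => 1 + (a - b) * (b + s)⁻¹) atTop (nhds (1 + (a-b) * 0)) := by
      refine tendsto_const_nhds.add (tendsto_const_nhds.mul ?_)
      exact tendsto_inv_atTop_zero.comp (tendsto_atTop_add_const_left _ b tendsto_id)
    rw [mul_zero, add_zero] at h2
    refine Tendsto.congr' ?_ h2
    filter_upwards [eventually_gt_atTop 0] with s hs
    have hbs : b + s ≠ 0 := by positivity
    field_simp
    ring
  have h3 : Tendsto (fun s : ℝ => Real.log ((a + s) / (b + s))) atTop (nhds 0) := by
    have := (Real.continuousAt_log (x := 1) one_ne_zero).tendsto.comp h1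
    rw [Real.log_one] at this
    exact this
  refine Tendsto.congr' ?_ h3
  filter_upwards [eventually_gt_atTop 0] with s hs
  rw [Real.log_div (by positivity) (by positivity)]

lemma hasDeriv_aux {a b : ℝ} (ha : 0 < a) (hb : 0 < b) {s : ℝ} (hs : s ∈ Ici (0:ℝ)) :
    HasDerivAt (fun s : ℝ => Real.log (a + s) - Real.log (b + s))
      ((b - a) / ((a + s) * (b + s))) s := by
  have hs0 : 0 ≤ s := hs
  have has : (0:ℝ) < a + s := by positivity
  have hbs : (0:ℝ) < b + s := by positivity
  have h1 : HasDerivAt (fun s : ℝ => Real.log (a + s)) (1 / (a + s)) s :=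
    ((hasDerivAt_id s).const_add a).log has.ne'
  have h2 : HasDerivAt (fun s : ℝ => Real.log (b + s)) (1 / (b + s)) s :=
    ((hasDerivAt_id s).const_add b).log hbs.ne'
  have := h1.sub h2
  rw [show (b - a) / ((a + s) * (b + s)) = 1 / (a + s) - 1 / (b + s) by
    rw [div_sub_div _ _ has.ne' hbs.ne']; ring]
  exact this

lemma kernel_le {a b : ℝ} (ha : 0 < a) (hb : 0 < b) (hab : a ≤ b) :
    IntegrableOn (fun s : ℝ => (b - a) / ((a + s) * (b + s))) (Ioi 0) ∧
    ∫ s in Ioi (0:ℝ), (b - a) / ((a + s) * (b + s)) = Real.log b - Real.log a := by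
  have hpos : ∀ s ∈ Ioi (0:ℝ), 0 ≤ (b - a) / ((a + s) * (b + s)) := by
    intro s hs
    have : (0:ℝ) < s := hs
    have : (0:ℝ) < (a+s)*(b+s) := by positivity
    exact div_nonneg (by linarith) this.le
  refine ⟨integrableOn_Ioi_deriv_of_nonneg' (fun s hs => hasDeriv_aux ha hb hs) hpos
      (tendsto_aux ha hb), ?_⟩
  have := integral_Ioi_of_hasDerivAt_of_nonneg' (fun s hs => hasDeriv_aux ha hb hs) hpos
      (tendsto_aux ha hb)
  rw [this]
  simp

lemma kernel (a b : ℝ) (ha : 0 < a) (hb : 0 < b) :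
    IntegrableOn (fun s : ℝ => (b - a) / ((a + s) * (b + s))) (Ioi 0) ∧
    ∫ s in Ioi (0:ℝ), (b - a) / ((a + s) * (b + s)) = Real.log b - Real.log a := by
  rcases le_total a b with hab | hab
  · exact kernel_le ha hb hab
  · have h := kernel_le hb ha hab
    have heq : (fun s : ℝ => (b - a) / ((a + s) * (b + s)))
        = fun s : ℝ => -((a - b) / ((b + s) * (a + s))) := by
      funext s; rw [← neg_div]; ring_nf
    constructor
    · rw [heq]; exact h.1.neg
    · rw [heq, integral_neg, h.2]; ring

/-- `T_σ(X) = ∫₀^∞ (σ + s·1)⁻¹ X (σ + s·1)⁻¹ ds`, defined entrywise. -/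
noncomputable def Tmap {n : ℕ} (σ X : Matrix (Fin n) (Fin n) ℂ) : Matrix (Fin n) (Fin n) ℂ :=
  Matrix.of fun i j =>
    ∫ s in Set.Ioi (0 : ℝ),
      ((σ + (s : ℂ) • (1 : Matrix (Fin n) (Fin n) ℂ))⁻¹ * X
        * (σ + (s : ℂ) • (1 : Matrix (Fin n) (Fin n) ℂ))⁻¹) i j

/-- Matrix logarithm of a Hermitian matrix via the continuous functional calculus. -/
noncomputable def mlog {n : ℕ} (M : Matrix (Fin n) (Fin n) ℂ) : Matrix (Fin n) (Fin n) ℂ :=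
  cfc Real.log M

theorem Tmap_commutator {n : ℕ} (σ X : Matrix (Fin n) (Fin n) ℂ) (hσ : σ.PosDef) :
    Tmap σ (X * σ - σ * X) = X * mlog σ - mlog σ * X := by
  have hH := hσ.1
  set U : Matrix (Fin n) (Fin n) ℂ := (hH.eigenvectorUnitary : Matrix (Fin n) (Fin n) ℂ) with hU
  set d : Fin n → ℝ := hH.eigenvalues with hdd
  have hd : ∀ k, 0 < d k := fun k => hσ.eigenvalues_pos k
  have hU2 : star U * U = 1 := Matrix.mem_unitaryGroup_iff'.mp hH.eigenvectorUnitary.2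
  have hU1 : U * star U = 1 := Matrix.mem_unitaryGroup_iff.mp hH.eigenvectorUnitary.2
  have hcan : ∀ Z : Matrix (Fin n) (Fin n) ℂ, star U * (U * Z) = Z := by
    intro Z; rw [← mul_assoc, hU2, one_mul]
  have hcan' : ∀ Z : Matrix (Fin n) (Fin n) ℂ, U * (star U * Z) = Z := by
    intro Z; rw [← mul_assoc, hU1, one_mul]
  set D : Matrix (Fin n) (Fin n) ℂ := diagonal (fun k => ((d k : ℝ) : ℂ)) with hD
  have hspec : σ = U * D * star U := by
    have := hH.spectral_theorem
    convert this using 2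
    rfl
  set Y : Matrix (Fin n) (Fin n) ℂ := star U * X * U with hY
  have hX : X = U * Y * star U := by
    rw [hY]
    simp only [mul_assoc, hcan']
    rw [hU1, mul_one]
  have hdiagconst : ∀ c : ℂ, U * diagonal (fun _ : Fin n => c) * star U
      = diagonal (fun _ : Fin n => c) := by
    intro c
    rw [← smul_one_eq_diagonal, mul_smul_comm, mul_one, smul_mul_assoc, hU1]
  -- inverse formula
  have hinv : ∀ s : ℝ, s ∈ Set.Ioi (0:ℝ) →
      (σ + (s : ℂ) • (1 : Matrix (Fin n) (Fin n) ℂ))⁻¹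
        = U * diagonal (fun k => (((d k + s : ℝ) : ℂ))⁻¹) * star U := by
    intro s hs
    have hs0 : (0:ℝ) < s := hs
    apply inv_eq_right_inv
    have hfact : σ + (s : ℂ) • (1 : Matrix (Fin n) (Fin n) ℂ)
        = U * diagonal (fun k => ((d k : ℂ) + (s:ℂ))) * star U := by
      rw [hspec, smul_one_eq_diagonal, ← hdiagconst (s:ℂ), ← add_mul, ← mul_add,
        diagonal_add]
    rw [hfact]
    simp only [mul_assoc, hcan]
    rw [← mul_assoc (Matrix.diagonal _), Matrix.diagonal_mul_diagonal]
    have h1 : (fun k => ((d k : ℂ) + (s:ℂ)) * (((d k + s : ℝ) : ℂ))⁻¹) = (1 : Fin n → ℂ) := by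
      funext k
      rw [Pi.one_apply]
      have hne : ((d k + s : ℝ) : ℂ) ≠ 0 := by
        have := hd k
        exact_mod_cast (show (d k + s : ℝ) ≠ 0 by positivity)
      push_cast
      exact mul_inv_cancel₀ (by exact_mod_cast hne)
    rw [h1]
    have hdo : Matrix.diagonal (1 : Fin n → ℂ) = 1 := Matrix.diagonal_one
    rw [hdo, one_mul, hU1]
  have hmlog : mlog σ = U * Matrix.diagonal (fun k => ((Real.log (d k) : ℝ) : ℂ)) * star U := by
    rw [mlog, hH.cfc_eq]
    rw [Matrix.IsHermitian.cfc]
    rfl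
  have hentry : ∀ M : Matrix (Fin n) (Fin n) ℂ, ∀ i j,
      (U * M * star U) i j = ∑ k, ∑ l, U i k * M k l * star U l j := by
    intro M i j
    rw [Matrix.mul_apply]
    simp only [Matrix.mul_apply, Finset.sum_mul]
    rw [Finset.sum_comm]
  ext i j
  simp only [Tmap, Matrix.of_apply]
  have hpoint : ∀ s ∈ Set.Ioi (0:ℝ),
      ((σ + (s : ℂ) • (1 : Matrix (Fin n) (Fin n) ℂ))⁻¹ * (X * σ - σ * X)
        * (σ + (s : ℂ) • (1 : Matrix (Fin n) (Fin n) ℂ))⁻¹) i j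
      = ∑ k, ∑ l, (U i k * Y k l * star U l j)
          * (((d l - d k) / ((d k + s) * (d l + s)) : ℝ) : ℂ) := by
    intro s hs
    have hs0 : (0:ℝ) < s := hs
    rw [hinv s hs]
    have hmat : (U * Matrix.diagonal (fun k => (((d k + s : ℝ) : ℂ))⁻¹) * star U)
          * (X * σ - σ * X)
          * (U * Matrix.diagonal (fun k => (((d k + s : ℝ) : ℂ))⁻¹) * star U)
        = U * (Matrix.diagonal (fun k => (((d k + s : ℝ) : ℂ))⁻¹) * (Y * D - D * Y)
            * Matrix.diagonal (fun k => (((d k + s : ℝ) : ℂ))⁻¹)) * star U := by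
      rw [hspec, hY]
      simp only [mul_sub, sub_mul, mul_assoc, hcan]
    rw [hmat, hentry]
    refine Finset.sum_congr rfl fun k _ => Finset.sum_congr rfl fun l _ => ?_
    rw [hD]
    simp only [Matrix.sub_apply, Matrix.mul_diagonal, Matrix.diagonal_mul]
    have h1 : ((d k + s : ℝ) : ℂ) ≠ 0 := by
      have := hd k
      exact_mod_cast (show (d k + s : ℝ) ≠ 0 by positivity)
    have h2 : ((d l + s : ℝ) : ℂ) ≠ 0 := by
      have := hd l
      exact_mod_cast (show (d l + s : ℝ) ≠ 0 by positivity)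
    push_cast
    push_cast at h1 h2
    field_simp
  rw [MeasureTheory.setIntegral_congr_fun measurableSet_Ioi hpoint]
  have hIkl : ∀ k l : Fin n, Integrable
      (fun s : ℝ => (U i k * Y k l * star U l j)
        * (((d l - d k) / ((d k + s) * (d l + s)) : ℝ) : ℂ))
      (MeasureTheory.volume.restrict (Set.Ioi 0)) :=
    fun k l => ((kernel (d k) (d l) (hd k) (hd l)).1.ofReal).const_mul _
  rw [MeasureTheory.integral_finset_sum _
    (fun k _ => MeasureTheory.integrable_finset_sum _ (fun l _ => hIkl k l))]
  have hLHS : ∀ k : Fin n,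
      (∫ s in Set.Ioi (0:ℝ), ∑ l, (U i k * Y k l * star U l j)
          * (((d l - d k) / ((d k + s) * (d l + s)) : ℝ) : ℂ))
      = ∑ l, (U i k * Y k l * star U l j)
          * ((Real.log (d l) - Real.log (d k) : ℝ) : ℂ) := by
    intro k
    rw [MeasureTheory.integral_finset_sum _ (fun l _ => hIkl k l)]
    refine Finset.sum_congr rfl fun l _ => ?_
    rw [MeasureTheory.integral_const_mul]
    congr 1
    rw [← (kernel (d k) (d l) (hd k) (hd l)).2]
    exact integral_ofReal
  simp only [hLHS]
  -- now the RHS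
  rw [Matrix.sub_apply]
  nth_rewrite 1 [hX]
  nth_rewrite 1 [hX]
  rw [hmlog]
  have hmat2 : (U * Y * star U) * (U * Matrix.diagonal (fun k => ((Real.log (d k) : ℝ) : ℂ)) * star U)
      = U * (Y * Matrix.diagonal (fun k => ((Real.log (d k) : ℝ) : ℂ))) * star U := by
    simp only [mul_assoc, hcan]
  have hmat3 : (U * Matrix.diagonal (fun k => ((Real.log (d k) : ℝ) : ℂ)) * star U) * (U * Y * star U)
      = U * (Matrix.diagonal (fun k => ((Real.log (d k) : ℝ) : ℂ)) * Y) * star U := by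
    simp only [mul_assoc, hcan]
  rw [hmat2, hmat3, hentry, hentry, ← Finset.sum_sub_distrib]
  refine Finset.sum_congr rfl fun k _ => ?_
  rw [← Finset.sum_sub_distrib]
  refine Finset.sum_congr rfl fun l _ => ?_
  simp only [Matrix.mul_diagonal, Matrix.diagonal_mul]
  push_cast
  ring
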